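/- For a self-adjoint operator Q with −P⁰ ≤ Q ≤ 1 − P⁰ where P⁰ is an orthogonal projection, one has the operator inequality Q² ≤ (1−P⁰)Q(1−P⁰) − P⁰QP⁰. -/
import Mathlib


/-- For a bounded self-adjoint `Q` with `−P⁰ ≤ Q ≤ 1 − P⁰`, where `P⁰` is
an orthogonal projection, one has the operator inequality
`Q² ≤ (1−P⁰)Q(1−P⁰) − P⁰QP⁰`. -/
theorem square_le_blocks {H : Type*} [NormedAddCommGroup H] [InnerProductSpace ℂ H]
    [CompleteSpace H] (Q P0 : H →L[ℂ] H)
    (hQ : IsSelfAdjoint Q) (hP0 : IsSelfAdjoint P0) (hP0proj : P0 * P0 = P0)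
    (h1 : (Q + P0).IsPositive) (h2 : (1 - P0 - Q).IsPositive) :
    ((1 - P0) * Q * (1 - P0) - P0 * Q * P0 - Q * Q).IsPositive := by
  rw [← ContinuousLinearMap.nonneg_iff_isPositive] at *
  have key : (1 - P0) * Q * (1 - P0) - P0 * Q * P0 - Q * Q
      = (Q + P0) * (1 - P0 - Q) := by
    rw [show (Q + P0) * (1 - P0 - Q)
        = Q + P0 - P0 * P0 - Q * P0 - P0 * Q - Q * Q from by noncomm_ring, hP0proj]
    noncomm_ring
  set A : H →L[ℂ] H := Q + P0 with hA
  set s : H →L[ℂ] H := CFC.sqrt A with hs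
  have hss : s * s = A := CFC.sqrt_mul_sqrt_self A h1
  have hsstar : star s = s := IsSelfAdjoint.of_nonneg (CFC.sqrt_nonneg (a := A))
  have hfact : A * (1 - P0 - Q) = s * (1 - P0 - Q) * s := by
    have h1PQ : (1 : H →L[ℂ] H) - P0 - Q = 1 - A := by rw [hA]; abel
    rw [h1PQ, ← hss]
    noncomm_ring
  rw [key, hfact]
  nth_rewrite 1 [← hsstar]
  exact star_left_conjugate_nonneg h2 s
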